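/- Let n and k be positive integers, let S be the set of partitions of n having fewer than k parts greater than k, and let ℱ be a family of subsets of {k+1, k+2, …, 11k} such that the symmetric difference of any two distinct members of ℱ has size greater than 2k. Then |S| · |ℱ| ≤ Σ_{m=n}^{n+60k²+5k} p(m). -/

import Mathlib

open Filter Real

/-- The Ferrers diagram of a partition: the cell `(j, i)` (column `j`, row `i`)
belongs iff `1 ≤ j`, `1 ≤ i`, and at least `i` parts are `≥ j`
(i.e. row `i` has length `≥ j`). -/
def ferrersDiagram {n : ℕ} (lam : Nat.Partition n) : Set (ℤ × ℤ) :=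
  {c | 1 ≤ c.1 ∧ 1 ≤ c.2 ∧ c.2 ≤ ((lam.parts.filter (fun x => c.1 ≤ (x : ℤ))).card : ℤ)}

/-- The translate of the Ferrers diagram of `lam` with apex at `(a, b)`. -/
def placedFerrers {n : ℕ} (lam : Nat.Partition n) (a b : ℤ) : Set (ℤ × ℤ) :=
  (fun c : ℤ × ℤ => (c.1 + a - 1, c.2 + b - 1)) '' ferrersDiagram lam

/-- The number `p(n)` of partitions of `n`. -/
def numPartitions (n : ℕ) : ℕ := Fintype.card (Nat.Partition n)

/-- The rectangle `R_n` of width `p(n)` and height `n`. -/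
def rectR (n : ℕ) : Set (ℤ × ℤ) :=
  {c | 1 ≤ c.1 ∧ c.1 ≤ (numPartitions n : ℤ) ∧ 1 ≤ c.2 ∧ c.2 ≤ (n : ℤ)}

/-- If `S` is the set of partitions of `n` having fewer than `k` parts greater
than `k`, and `ℱ` is a family of subsets of `{k+1, …, 11k}` any two distinct
members of which have symmetric difference of size greater than `2k`, then
`|S| · |ℱ| ≤ Σ_{m=n}^{n+60k²+5k} p(m)`. -/
lemma icc_sum_le (k : ℕ) : (∑ i ∈ Finset.Icc (k+1) (11*k), i) ≤ 60 * k ^ 2 + 5 * k := by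
  have h1 : Finset.Icc (k+1) (11*k) = Finset.Ico (k+1) (11*k+1) := by
    rw [← Finset.Ico_add_one_right_eq_Icc]
  have h2 := Finset.sum_Ico_consecutive (fun i => i) (Nat.zero_le (k+1)) (by omega : k+1 ≤ 11*k+1)
  simp only [← Finset.range_eq_Ico] at h2
  have g1 := Finset.sum_range_id_mul_two (11*k+1)
  have g2 := Finset.sum_range_id_mul_two (k+1)
  simp only [Nat.add_sub_cancel] at g1 g2
  have key : (∑ i ∈ Finset.Icc (k+1) (11*k), i) * 2 = 120 * k^2 + 10 * k := by
    rw [h1]; nlinarith [h2, g1, g2]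
  nlinarith [key]

theorem few_large_parts_code_bound (n k : ℕ) (hn : 0 < n) (hk : 0 < k)
    (F : Finset (Finset ℕ))
    (hsub : ∀ A ∈ F, A ⊆ Finset.Icc (k + 1) (11 * k))
    (hdist : ∀ A ∈ F, ∀ B ∈ F, A ≠ B → 2 * k < (symmDiff A B).card) :
    Nat.card {lam : Nat.Partition n //
        ((lam.parts.filter fun x => k < x).card) < k} * F.card ≤
      ∑ m ∈ Finset.Icc n (n + 60 * k ^ 2 + 5 * k), numPartitions m := by
  classical
  set T := Finset.Icc n (n + 60 * k ^ 2 + 5 * k) with hT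
  -- the target sigma type
  have hmem : ∀ A ∈ F, n + A.sum id ∈ T := by
    intro A hA
    have : A.sum id ≤ 60 * k ^ 2 + 5 * k := by
      calc A.sum id ≤ (Finset.Icc (k+1) (11*k)).sum id :=
            Finset.sum_le_sum_of_subset (hsub A hA)
        _ ≤ 60 * k ^ 2 + 5 * k := icc_sum_le k
    have he : A.sum id = ∑ x ∈ A, x := Finset.sum_congr rfl (fun x _ => rfl)
    simp only [id_eq] at this
    simp only [hT, Finset.mem_Icc]
    omega
  set S := {lam : Nat.Partition n // ((lam.parts.filter fun x => k < x).card) < k}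
  -- define the injection
  let f : S × {A // A ∈ F} → Σ m : {m // m ∈ T}, Nat.Partition m := fun p =>
    ⟨⟨n + p.2.1.sum id, hmem _ p.2.2⟩,
      { parts := p.1.1.parts + p.2.1.val
        parts_pos := by
          intro x hx
          rcases Multiset.mem_add.mp hx with h | h
          · exact p.1.1.parts_pos h
          · have := hsub _ p.2.2 h
            rw [Finset.mem_Icc] at this
            omega
        parts_sum := by
          rw [Multiset.sum_add, p.1.1.parts_sum]
          show n + _ = n + _
          congr 1
          rw [Finset.sum_eq_multiset_sum, Multiset.map_id] }⟩
  have hinj : Function.Injective f := by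
    rintro ⟨⟨lam, hlam⟩, ⟨A, hA⟩⟩ ⟨⟨lam', hlam'⟩, ⟨A', hA'⟩⟩ h
    have hparts : lam.parts + A.val = lam'.parts + A'.val := by
      have := congrArg (fun s : Σ m : {m // m ∈ T}, Nat.Partition m => s.2.parts) h
      exact this
    -- A = A'
    have hAA : A = A' := by
      by_contra hne
      have hfilt : (lam.parts.filter fun x => k < x) + A.val
          = (lam'.parts.filter fun x => k < x) + A'.val := by
        have hAf : A.val.filter (fun x => k < x) = A.val := by
          rw [Multiset.filter_eq_self]
          intro x hx
          have := hsub _ hA hx; rw [Finset.mem_Icc] at this; omega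
        have hAf' : A'.val.filter (fun x => k < x) = A'.val := by
          rw [Multiset.filter_eq_self]
          intro x hx
          have := hsub _ hA' hx; rw [Finset.mem_Icc] at this; omega
        have := congrArg (Multiset.filter fun x => k < x) hparts
        rwa [Multiset.filter_add, Multiset.filter_add, hAf, hAf'] at this
      have key : ∀ (B B' : Finset ℕ) (mu mu' : Nat.Partition n),
          B ∈ F → B' ∈ F →
          (mu.parts.filter fun x => k < x) + B.val
            = (mu'.parts.filter fun x => k < x) + B'.val →
          (B \ B').card ≤ (mu'.parts.filter fun x => k < x).card := by
        intro B B' mu mu' hB hB' heq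
        have hle : (B \ B').val ≤ mu'.parts.filter fun x => k < x := by
          rw [Multiset.le_iff_count]
          intro x
          by_cases hx : x ∈ B \ B'
          · have hc1 : (B \ B').val.count x = 1 := by
              rw [Multiset.count_eq_one_of_mem (B \ B').nodup hx]
            rw [hc1]
            rw [Finset.mem_sdiff] at hx
            have hcB : B.val.count x = 1 := Multiset.count_eq_one_of_mem B.nodup hx.1
            have hcB' : B'.val.count x = 0 := Multiset.count_eq_zero.mpr hx.2
            have := congrArg (Multiset.count x) heq
            rw [Multiset.count_add, Multiset.count_add, hcB, hcB'] at this
            omega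
          · rw [Multiset.count_eq_zero.mpr (fun h' => hx (Finset.mem_def.mpr h'))]
            exact Nat.zero_le _
        have := Multiset.card_le_card hle
        exact this
      have h1 := key A A' lam lam' hA hA' hfilt
      have h2 := key A' A lam' lam hA' hA hfilt.symm
      have hsd : (symmDiff A A').card = (A \ A').card + (A' \ A).card := by
        rw [symmDiff_def, Finset.sup_eq_union]
        exact Finset.card_union_of_disjoint disjoint_sdiff_sdiff
      have := hdist A hA A' hA' hne
      omega
    subst hAA
    have hlp : lam.parts = lam'.parts := by
      have := hparts
      exact add_right_cancel this
    have : lam = lam' := Nat.Partition.ext hlp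
    simp [this]
  -- counting
  have hcard := Fintype.card_le_of_injective f hinj
  rw [Fintype.card_prod, Fintype.card_sigma] at hcard
  have hS : Nat.card S = Fintype.card S := Nat.card_eq_fintype_card
  have hF : Fintype.card {A // A ∈ F} = F.card := Fintype.card_coe F
  have hR : (∑ m : {m // m ∈ T}, Fintype.card (Nat.Partition m))
      = ∑ m ∈ T, numPartitions m := by
    rw [← Finset.sum_attach T (fun m => numPartitions m)]
    rfl
  rw [hS, ← hF, ← hR]
  exact hcard
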